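/- Let φ be a formula of ML(⊻) or EMDL. Then φ is valid if and only if K,T ⊨ φ for every Kripke model K and every team T of K with |T| ≤ 2^{vrank(φ)}. -/

import Mathlib

/-- A Kripke model over a (nonempty) type `W` of worlds: an accessibility
relation `R` and a valuation `V`. -/
structure Kripke (W : Type) where
  R : W → W → Prop
  V : ℕ → Set W

/-- The image team `R[T] = {w | ∃ v ∈ T, v R w}`. -/
def Kripke.img {W : Type} (K : Kripke W) (T : Set W) : Set W :=
  {w | ∃ v ∈ T, K.R v w}

/-- `T[R]S`: every world of `T` has an `R`-successor in `S` and every world of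
`S` has an `R`-predecessor in `T`. -/
def Kripke.step {W : Type} (K : Kripke W) (T S : Set W) : Prop :=
  (∀ w ∈ T, ∃ v ∈ S, K.R w v) ∧ (∀ v ∈ S, ∃ w ∈ T, K.R w v)

/-- Formulas of modal logic `ML` in negation normal form. -/
inductive MLForm : Type
  | pos : ℕ → MLForm
  | neg : ℕ → MLForm
  | and : MLForm → MLForm → MLForm
  | or  : MLForm → MLForm → MLForm
  | dia : MLForm → MLForm
  | box : MLForm → MLForm

/-- Team semantics for `ML`. A team is a set of worlds. -/
def MLSat {W : Type} (K : Kripke W) : Set W → MLForm → Prop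
  | T, .pos p => T ⊆ K.V p
  | T, .neg p => T ∩ K.V p = ∅
  | T, .and φ ψ => MLSat K T φ ∧ MLSat K T ψ
  | T, .or φ ψ => ∃ T₁ T₂, T₁ ∪ T₂ = T ∧ MLSat K T₁ φ ∧ MLSat K T₂ ψ
  | T, .dia φ => ∃ T', K.step T T' ∧ MLSat K T' φ
  | T, .box φ => MLSat K (K.img T) φ

/-- Formulas of `ML(⊻)`: modal logic in negation normal form extended with
intuitionistic disjunction `⊻` (`idis`). -/
inductive MLIForm : Type
  | pos : ℕ → MLIForm
  | neg : ℕ → MLIForm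
  | and : MLIForm → MLIForm → MLIForm
  | or  : MLIForm → MLIForm → MLIForm
  | dia : MLIForm → MLIForm
  | box : MLIForm → MLIForm
  | idis : MLIForm → MLIForm → MLIForm

/-- Team semantics for `ML(⊻)`. -/
def MLISat {W : Type} (K : Kripke W) : Set W → MLIForm → Prop
  | T, .pos p => T ⊆ K.V p
  | T, .neg p => T ∩ K.V p = ∅
  | T, .and φ ψ => MLISat K T φ ∧ MLISat K T ψ
  | T, .or φ ψ => ∃ T₁ T₂, T₁ ∪ T₂ = T ∧ MLISat K T₁ φ ∧ MLISat K T₂ ψ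
  | T, .dia φ => ∃ T', K.step T T' ∧ MLISat K T' φ
  | T, .box φ => MLISat K (K.img T) φ
  | T, .idis φ ψ => MLISat K T φ ∨ MLISat K T ψ

/-- `vrank φ`: the number of occurrences of `⊻` in an `ML(⊻)`-formula. -/
def vrank : MLIForm → ℕ
  | .pos _ => 0
  | .neg _ => 0
  | .and φ ψ => vrank φ + vrank ψ
  | .or φ ψ => vrank φ + vrank ψ
  | .dia φ => vrank φ
  | .box φ => vrank φ
  | .idis φ ψ => vrank φ + vrank ψ + 1

/-- All tuples (lists) of `n` signs (Booleans), i.e. `{⊥,⊤}ⁿ`. -/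
def allBLists : ℕ → List (List Bool)
  | 0 => [[]]
  | n + 1 => (allBLists n).flatMap fun l => [true :: l, false :: l]

/-- `φ^⊥`: the negation normal form of `¬φ`, for an `ML`-formula `φ` in
negation normal form. -/
def MLForm.nnfNeg : MLForm → MLForm
  | .pos p => .neg p
  | .neg p => .pos p
  | .and φ ψ => .or φ.nnfNeg ψ.nnfNeg
  | .or φ ψ => .and φ.nnfNeg ψ.nnfNeg
  | .dia φ => .box φ.nnfNeg
  | .box φ => .dia φ.nnfNeg

/-- The embedding of `ML` into `ML(⊻)`. -/
def MLForm.toMLI : MLForm → MLIForm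
  | .pos p => .pos p
  | .neg p => .neg p
  | .and φ ψ => .and φ.toMLI ψ.toMLI
  | .or φ ψ => .or φ.toMLI ψ.toMLI
  | .dia φ => .dia φ.toMLI
  | .box φ => .box φ.toMLI

/-- `φ^a`: the formula `φ` if `a = ⊤` and `φ^⊥` if `a = ⊥`. -/
def mlLit (φ : MLForm) (a : Bool) : MLIForm :=
  if a then φ.toMLI else φ.nnfNeg.toMLI

/-- The conjunction `φ₁^{a₁} ∧ … ∧ φₙ^{aₙ} ∧ (ψ ⊻ ψ^⊥)`. -/
def mlDepConj (φs : List MLForm) (a : List Bool) (ψ : MLForm) : MLIForm :=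
  (List.zipWith mlLit φs a).foldr MLIForm.and
    (MLIForm.idis ψ.toMLI ψ.nnfNeg.toMLI)

/-- Big splitting disjunction `⋁` of a (nonempty) list of formulas. -/
def mlBigOr : List MLIForm → MLIForm
  | [] => .pos 0
  | [φ] => φ
  | φ :: ψ :: l => .or φ (mlBigOr (ψ :: l))

/-- The `ML(⊻)`-formula
`⋁_{a₁,…,aₙ ∈ {⊥,⊤}} (φ₁^{a₁} ∧ … ∧ φₙ^{aₙ} ∧ (ψ ⊻ ψ^⊥))`. -/
def mlDepTranslation (φs : List MLForm) (ψ : MLForm) : MLIForm :=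
  mlBigOr ((allBLists φs.length).map fun a => mlDepConj φs a ψ)

/-- Formulas of extended modal dependence logic `EMDL`: modal logic in
negation normal form extended with dependence atoms `=(φ₁,…,φₙ,ψ)` over
`ML`-formulas. -/
inductive EMDLForm : Type
  | pos : ℕ → EMDLForm
  | neg : ℕ → EMDLForm
  | and : EMDLForm → EMDLForm → EMDLForm
  | or  : EMDLForm → EMDLForm → EMDLForm
  | dia : EMDLForm → EMDLForm
  | box : EMDLForm → EMDLForm
  | dep : List MLForm → MLForm → EMDLForm

/-- Team semantics for `EMDL`. -/
def EMDLSat {W : Type} (K : Kripke W) : Set W → EMDLForm → Prop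
  | T, .pos p => T ⊆ K.V p
  | T, .neg p => T ∩ K.V p = ∅
  | T, .and φ ψ => EMDLSat K T φ ∧ EMDLSat K T ψ
  | T, .or φ ψ => ∃ T₁ T₂, T₁ ∪ T₂ = T ∧ EMDLSat K T₁ φ ∧ EMDLSat K T₂ ψ
  | T, .dia φ => ∃ T', K.step T T' ∧ EMDLSat K T' φ
  | T, .box φ => EMDLSat K (K.img T) φ
  | T, .dep φs ψ => ∀ w ∈ T, ∀ v ∈ T,
      (∀ χ ∈ φs, (MLSat K {w} χ ↔ MLSat K {v} χ)) →
      (MLSat K {w} ψ ↔ MLSat K {v} ψ)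

/-- The compositional translation of `EMDL` into `ML(⊻)`, replacing each
dependence atom `=(φ₁,…,φₙ,ψ)` by
`⋁_{a⃗ ∈ {⊥,⊤}ⁿ} (φ₁^{a₁} ∧ … ∧ φₙ^{aₙ} ∧ (ψ ⊻ ψ^⊥))`. -/
def EMDLForm.toMLI : EMDLForm → MLIForm
  | .pos p => .pos p
  | .neg p => .neg p
  | .and φ ψ => .and φ.toMLI ψ.toMLI
  | .or φ ψ => .or φ.toMLI ψ.toMLI
  | .dia φ => .dia φ.toMLI
  | .box φ => .box φ.toMLI
  | .dep φs ψ => mlDepTranslation φs ψ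

/-- `vrank` of an `EMDL`-formula: the number of `⊻`'s in its `ML(⊻)`
translation. -/
def vrankE (φ : EMDLForm) : ℕ := vrank φ.toMLI

section Lemmas
variable {W : Type} (K : Kripke W)

lemma mlsat_empty : ∀ φ : MLForm, MLSat K ∅ φ := by
  intro φ
  induction φ with
  | pos p => simp [MLSat]
  | neg p => simp [MLSat]
  | and φ ψ ihφ ihψ => exact ⟨ihφ, ihψ⟩
  | or φ ψ ihφ ihψ => exact ⟨∅, ∅, by simp, ihφ, ihψ⟩
  | dia φ ih => exact ⟨∅, ⟨by simp, by simp⟩, ih⟩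
  | box φ ih => simpa [MLSat, Kripke.img] using ih

lemma mlsat_flat : ∀ (φ : MLForm) (T : Set W),
    MLSat K T φ ↔ ∀ w ∈ T, MLSat K {w} φ := by
  intro φ
  induction φ with
  | pos p => intro T; simp [MLSat, Set.subset_def]
  | neg p =>
      intro T
      simp only [MLSat, Set.eq_empty_iff_forall_notMem, Set.mem_inter_iff,
        Set.mem_singleton_iff, not_and]
      aesop
  | and φ ψ ihφ ihψ =>
      intro T
      constructor
      · rintro ⟨h1, h2⟩ w hw
        exact ⟨(ihφ T).mp h1 w hw, (ihψ T).mp h2 w hw⟩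
      · intro h
        exact ⟨(ihφ T).mpr fun w hw => (h w hw).1, (ihψ T).mpr fun w hw => (h w hw).2⟩
  | or φ ψ ihφ ihψ =>
      intro T
      constructor
      · rintro ⟨T₁, T₂, rfl, h₁, h₂⟩ w hw
        rcases hw with hw | hw
        · exact ⟨{w}, ∅, by simp, (ihφ T₁).mp h₁ w hw, mlsat_empty K ψ⟩
        · exact ⟨∅, {w}, by simp, mlsat_empty K φ, (ihψ T₂).mp h₂ w hw⟩
      · intro h
        refine ⟨{w ∈ T | MLSat K {w} φ}, {w ∈ T | MLSat K {w} ψ}, ?_, ?_, ?_⟩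
        · ext x
          simp only [Set.mem_union, Set.mem_setOf_eq]
          constructor
          · rintro (⟨h1, _⟩ | ⟨h1, _⟩) <;> exact h1
          · intro hx
            rcases h x hx with ⟨S₁, S₂, hS, h₁, h₂⟩
            have : x ∈ S₁ ∪ S₂ := by rw [hS]; simp
            rcases this with hx1 | hx1
            · exact Or.inl ⟨hx, (ihφ S₁).mp h₁ x hx1⟩
            · exact Or.inr ⟨hx, (ihψ S₂).mp h₂ x hx1⟩
        · exact (ihφ _).mpr (fun w hw => hw.2)
        · exact (ihψ _).mpr (fun w hw => hw.2)
  | dia φ ih =>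
      intro T
      constructor
      · rintro ⟨T', ⟨hst1, hst2⟩, hT'⟩ w hw
        rcases hst1 w hw with ⟨v, hv, hRv⟩
        exact ⟨{v}, ⟨by intro x hx; exact ⟨v, rfl, by simpa [Set.mem_singleton_iff.mp hx] using hRv⟩,
          by rintro x rfl; exact ⟨w, rfl, hRv⟩⟩, (ih T').mp hT' v hv⟩
      · intro h
        choose S hS hSφ using h
        refine ⟨⋃ w : T, S w w.2, ⟨?_, ?_⟩, ?_⟩
        · intro w hw
          rcases (hS w hw).1 w rfl with ⟨v, hv, hR⟩
          exact ⟨v, Set.mem_iUnion.mpr ⟨⟨w, hw⟩, hv⟩, hR⟩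
        · intro v hv
          rcases Set.mem_iUnion.mp hv with ⟨⟨w, hw⟩, hvS⟩
          rcases (hS w hw).2 v hvS with ⟨x, hx, hR⟩
          exact ⟨w, hw, by rwa [Set.mem_singleton_iff.mp hx] at hR⟩
        · refine (ih _).mpr ?_
          intro v hv
          rcases Set.mem_iUnion.mp hv with ⟨⟨w, hw⟩, hvS⟩
          exact (ih _).mp (hSφ w hw) v hvS
  | box φ ih =>
      intro T
      constructor
      · intro h w hw
        show MLSat K (K.img {w}) φ
        refine (ih _).mpr ?_
        intro v hv
        rcases hv with ⟨x, hx, hR⟩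
        rw [Set.mem_singleton_iff] at hx
        subst hx
        exact (ih _).mp h v ⟨x, hw, hR⟩
      · intro h
        show MLSat K (K.img T) φ
        refine (ih _).mpr ?_
        rintro v ⟨w, hw, hR⟩
        exact (ih _).mp (h w hw) v ⟨w, rfl, hR⟩

end Lemmas
section Lemmas2
variable {W : Type} (K : Kripke W)

lemma mlsat_nnfNeg : ∀ (φ : MLForm) (w : W),
    MLSat K {w} φ.nnfNeg ↔ ¬ MLSat K {w} φ := by
  intro φ
  induction φ with
  | pos p => intro w; simp [MLForm.nnfNeg, MLSat, Set.eq_empty_iff_forall_notMem]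
  | neg p => intro w; simp [MLForm.nnfNeg, MLSat, Set.eq_empty_iff_forall_notMem]
  | and φ ψ ihφ ihψ =>
      intro w
      show MLSat K {w} (.or φ.nnfNeg ψ.nnfNeg) ↔ ¬ (MLSat K {w} φ ∧ MLSat K {w} ψ)
      rw [mlsat_flat K (.or φ.nnfNeg ψ.nnfNeg) {w}]
      constructor
      · intro h hc
        rcases h w rfl with ⟨S₁, S₂, hS, h₁, h₂⟩
        have hw : w ∈ S₁ ∪ S₂ := by rw [hS]; exact rfl
        rcases hw with hw | hw
        · exact (ihφ w).mp ((mlsat_flat K _ S₁).mp h₁ w hw) hc.1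
        · exact (ihψ w).mp ((mlsat_flat K _ S₂).mp h₂ w hw) hc.2
      · intro h v hv
        rw [Set.mem_singleton_iff] at hv; subst hv
        rw [not_and_or] at h
        rcases h with h | h
        · exact ⟨{v}, ∅, by simp, (ihφ v).mpr h, mlsat_empty K _⟩
        · exact ⟨∅, {v}, by simp, mlsat_empty K _, (ihψ v).mpr h⟩
  | or φ ψ ihφ ihψ =>
      intro w
      show (MLSat K {w} φ.nnfNeg ∧ MLSat K {w} ψ.nnfNeg) ↔
        ¬ ∃ T₁ T₂, T₁ ∪ T₂ = {w} ∧ MLSat K T₁ φ ∧ MLSat K T₂ ψ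
      rw [ihφ, ihψ]
      constructor
      · rintro ⟨h1, h2⟩ ⟨T₁, T₂, hT, hs1, hs2⟩
        have hw : w ∈ T₁ ∪ T₂ := by rw [hT]; exact rfl
        rcases hw with hw | hw
        · exact h1 ((mlsat_flat K φ T₁).mp hs1 w hw)
        · exact h2 ((mlsat_flat K ψ T₂).mp hs2 w hw)
      · intro h
        constructor
        · intro hc; exact h ⟨{w}, ∅, by simp, hc, mlsat_empty K _⟩
        · intro hc; exact h ⟨∅, {w}, by simp, mlsat_empty K _, hc⟩
  | dia φ ih =>
      intro w
      show MLSat K (K.img {w}) φ.nnfNeg ↔ ¬ ∃ T', K.step {w} T' ∧ MLSat K T' φ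
      constructor
      · rintro h ⟨T', ⟨hs1, hs2⟩, hT'⟩
        rcases hs1 w rfl with ⟨v, hv, hR⟩
        have hvi : v ∈ K.img {w} := ⟨w, rfl, hR⟩
        exact (ih v).mp ((mlsat_flat K _ _).mp h v hvi)
          ((mlsat_flat K _ _).mp hT' v hv)
      · intro h
        refine (mlsat_flat K _ _).mpr ?_
        rintro v ⟨x, hx, hR⟩
        rw [Set.mem_singleton_iff] at hx; subst hx
        refine (ih v).mpr fun hc => h ⟨{v}, ⟨?_, ?_⟩, hc⟩
        · rintro y hy
          rw [Set.mem_singleton_iff] at hy; subst hy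
          exact ⟨v, rfl, hR⟩
        · rintro y hy
          rw [Set.mem_singleton_iff] at hy; subst hy
          exact ⟨x, rfl, hR⟩
  | box φ ih =>
      intro w
      show (∃ T', K.step {w} T' ∧ MLSat K T' φ.nnfNeg) ↔ ¬ MLSat K (K.img {w}) φ
      constructor
      · rintro ⟨T', ⟨hs1, hs2⟩, hT'⟩ hc
        rcases hs1 w rfl with ⟨v, hv, hR⟩
        have hvi : v ∈ K.img {w} := ⟨w, rfl, hR⟩
        exact (ih v).mp ((mlsat_flat K _ _).mp hT' v hv)
          ((mlsat_flat K _ _).mp hc v hvi)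
      · intro h
        by_cases hsucc : ∃ v, K.R w v
        · rcases hsucc with ⟨v₀, hv₀⟩
          by_cases hall : ∀ v, K.R w v → MLSat K {v} φ
          · exfalso
            apply h
            refine (mlsat_flat K _ _).mpr ?_
            rintro v ⟨x, hx, hR⟩
            rw [Set.mem_singleton_iff] at hx; subst hx
            exact hall v hR
          · push_neg at hall
            rcases hall with ⟨v, hR, hv⟩
            refine ⟨{v}, ⟨?_, ?_⟩, (mlsat_flat K _ _).mpr ?_⟩
            · rintro y hy; rw [Set.mem_singleton_iff] at hy; subst hy; exact ⟨v, rfl, hR⟩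
            · rintro y hy; rw [Set.mem_singleton_iff] at hy; subst hy; exact ⟨w, rfl, hR⟩
            · rintro y hy; rw [Set.mem_singleton_iff] at hy; subst hy
              exact (ih y).mpr hv
        · exfalso
          apply h
          have : K.img {w} = ∅ := by
            ext v
            simp only [Kripke.img, Set.mem_setOf_eq, Set.mem_singleton_iff,
              Set.mem_empty_iff_false, iff_false]
            rintro ⟨x, rfl, hR⟩
            exact hsucc ⟨v, hR⟩
          rw [this]
          exact mlsat_empty K φ

lemma mlisat_toMLI : ∀ (φ : MLForm) (T : Set W),
    MLISat K T φ.toMLI ↔ MLSat K T φ := by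
  intro φ
  induction φ with
  | pos p => intro T; rfl
  | neg p => intro T; rfl
  | and φ ψ ihφ ihψ =>
      intro T
      show (MLISat K T φ.toMLI ∧ MLISat K T ψ.toMLI) ↔ _
      rw [ihφ, ihψ]; rfl
  | or φ ψ ihφ ihψ =>
      intro T
      show (∃ T₁ T₂, T₁ ∪ T₂ = T ∧ MLISat K T₁ φ.toMLI ∧ MLISat K T₂ ψ.toMLI) ↔ _
      simp only [ihφ, ihψ]; rfl
  | dia φ ih =>
      intro T
      show (∃ T', K.step T T' ∧ MLISat K T' φ.toMLI) ↔ _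
      simp only [ih]; rfl
  | box φ ih =>
      intro T
      show MLISat K (K.img T) φ.toMLI ↔ _
      rw [ih]; rfl

end Lemmas2
/-- Pull the `⊻`'s of an `ML(⊻)`-formula to the front: `φ ≡ ⊻ (select φ)`. -/
def select : MLIForm → List MLForm
  | .pos p => [.pos p]
  | .neg p => [.neg p]
  | .and φ ψ => (select φ).flatMap fun α => (select ψ).map (MLForm.and α)
  | .or φ ψ => (select φ).flatMap fun α => (select ψ).map (MLForm.or α)
  | .dia φ => (select φ).map MLForm.dia
  | .box φ => (select φ).map MLForm.box
  | .idis φ ψ => select φ ++ select ψ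

section Lemmas3
variable {W : Type} (K : Kripke W)

lemma select_correct : ∀ (φ : MLIForm) (T : Set W),
    MLISat K T φ ↔ ∃ α ∈ select φ, MLSat K T α := by
  intro φ
  induction φ with
  | pos p => intro T; simp [select, MLISat, MLSat]
  | neg p => intro T; simp [select, MLISat, MLSat]
  | and φ ψ ihφ ihψ =>
      intro T
      show (MLISat K T φ ∧ MLISat K T ψ) ↔ _
      rw [ihφ, ihψ]
      simp only [select, List.mem_flatMap, List.mem_map]
      constructor
      · rintro ⟨⟨α, hα, hsα⟩, ⟨β, hβ, hsβ⟩⟩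
        exact ⟨.and α β, ⟨α, hα, β, hβ, rfl⟩, hsα, hsβ⟩
      · rintro ⟨γ, ⟨α, hα, β, hβ, rfl⟩, hs1, hs2⟩
        exact ⟨⟨α, hα, hs1⟩, ⟨β, hβ, hs2⟩⟩
  | or φ ψ ihφ ihψ =>
      intro T
      show (∃ T₁ T₂, T₁ ∪ T₂ = T ∧ MLISat K T₁ φ ∧ MLISat K T₂ ψ) ↔ _
      simp only [select, List.mem_flatMap, List.mem_map]
      constructor
      · rintro ⟨T₁, T₂, hT, h₁, h₂⟩
        rcases (ihφ T₁).mp h₁ with ⟨α, hα, hsα⟩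
        rcases (ihψ T₂).mp h₂ with ⟨β, hβ, hsβ⟩
        exact ⟨.or α β, ⟨α, hα, β, hβ, rfl⟩, T₁, T₂, hT, hsα, hsβ⟩
      · rintro ⟨γ, ⟨α, hα, β, hβ, rfl⟩, T₁, T₂, hT, hs1, hs2⟩
        exact ⟨T₁, T₂, hT, (ihφ T₁).mpr ⟨α, hα, hs1⟩, (ihψ T₂).mpr ⟨β, hβ, hs2⟩⟩
  | dia φ ih =>
      intro T
      show (∃ T', K.step T T' ∧ MLISat K T' φ) ↔ _
      simp only [select, List.mem_map]
      constructor
      · rintro ⟨T', hst, hT'⟩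
        rcases (ih T').mp hT' with ⟨α, hα, hsα⟩
        exact ⟨.dia α, ⟨α, hα, rfl⟩, T', hst, hsα⟩
      · rintro ⟨γ, ⟨α, hα, rfl⟩, T', hst, hs⟩
        exact ⟨T', hst, (ih T').mpr ⟨α, hα, hs⟩⟩
  | box φ ih =>
      intro T
      show MLISat K (K.img T) φ ↔ _
      rw [ih]
      simp only [select, List.mem_map]
      constructor
      · rintro ⟨α, hα, hs⟩
        exact ⟨.box α, ⟨α, hα, rfl⟩, hs⟩
      · rintro ⟨γ, ⟨α, hα, rfl⟩, hs⟩
        exact ⟨α, hα, hs⟩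
  | idis φ ψ ihφ ihψ =>
      intro T
      show (MLISat K T φ ∨ MLISat K T ψ) ↔ _
      rw [ihφ, ihψ]
      simp only [select, List.mem_append]
      constructor
      · rintro (⟨α, hα, hs⟩ | ⟨α, hα, hs⟩)
        · exact ⟨α, Or.inl hα, hs⟩
        · exact ⟨α, Or.inr hα, hs⟩
      · rintro ⟨α, hα | hα, hs⟩
        · exact Or.inl ⟨α, hα, hs⟩
        · exact Or.inr ⟨α, hα, hs⟩

end Lemmas3

lemma length_flatMap_map {α β γ : Type*} (l₁ : List α) (l₂ : List β) (f : α → β → γ) :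
    (l₁.flatMap fun a => l₂.map (f a)).length = l₁.length * l₂.length := by
  induction l₁ with
  | nil => simp
  | cons a l ih => simp [List.flatMap_cons, ih, Nat.succ_mul, Nat.add_comm]

lemma encard_image_list_le {α β : Type*} (l : List α) (g : α → β) :
    (g '' {a | a ∈ l}).encard ≤ (l.length : ℕ∞) := by
  induction l with
  | nil => simp
  | cons a l ih =>
      have : {x | x ∈ a :: l} = insert a {x | x ∈ l} := by ext x; simp
      rw [this, Set.image_insert_eq]
      calc (insert (g a) (g '' {x | x ∈ l})).encard
          ≤ (g '' {x | x ∈ l}).encard + 1 := Set.encard_insert_le _ _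
        _ ≤ (l.length : ℕ∞) + 1 := by gcongr
        _ = ((a :: l).length : ℕ∞) := by
            rw [List.length_cons]
            push_cast
            ring

lemma select_length : ∀ φ : MLIForm, (select φ).length ≤ 2 ^ vrank φ := by
  intro φ
  induction φ with
  | pos p => simp [select, vrank]
  | neg p => simp [select, vrank]
  | and φ ψ ihφ ihψ =>
      show ((select φ).flatMap fun α => (select ψ).map (MLForm.and α)).length ≤
        2 ^ (vrank φ + vrank ψ)
      rw [pow_add]
      calc ((select φ).flatMap fun α => (select ψ).map (MLForm.and α)).length
          = (select φ).length * (select ψ).length := length_flatMap_map _ _ _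
        _ ≤ 2 ^ vrank φ * 2 ^ vrank ψ := Nat.mul_le_mul ihφ ihψ
  | or φ ψ ihφ ihψ =>
      show ((select φ).flatMap fun α => (select ψ).map (MLForm.or α)).length ≤
        2 ^ (vrank φ + vrank ψ)
      rw [pow_add]
      calc ((select φ).flatMap fun α => (select ψ).map (MLForm.or α)).length
          = (select φ).length * (select ψ).length := length_flatMap_map _ _ _
        _ ≤ 2 ^ vrank φ * 2 ^ vrank ψ := Nat.mul_le_mul ihφ ihψ
  | dia φ ih => simpa [select, vrank] using ih
  | box φ ih => simpa [select, vrank] using ih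
  | idis φ ψ ihφ ihψ =>
      show (select φ ++ select ψ).length ≤ 2 ^ (vrank φ + vrank ψ + 1)
      rw [List.length_append, pow_succ, mul_two]
      exact Nat.add_le_add
        (le_trans ihφ (Nat.pow_le_pow_right (by norm_num) (Nat.le_add_right _ _)))
        (le_trans ihψ (Nat.pow_le_pow_right (by norm_num) (Nat.le_add_left _ _)))

/-- Coherence: if `φ` holds on all teams of size at most `2 ^ vrank φ`, then
it holds on every team. -/
lemma mli_coherent {W : Type} [Nonempty W] (K : Kripke W) (φ : MLIForm) (T : Set W)
    (h : ∀ S : Set W, S.encard ≤ (2 ^ vrank φ : ℕ) → MLISat K S φ) :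
    MLISat K T φ := by
  by_contra hc
  rw [select_correct] at hc
  push_neg at hc
  have hch : ∀ α : MLForm, ∃ w : W, α ∈ select φ → (w ∈ T ∧ ¬ MLSat K {w} α) := by
    intro α
    by_cases hα : α ∈ select φ
    · have := hc α hα
      rw [mlsat_flat] at this
      push_neg at this
      rcases this with ⟨w, hw, hns⟩
      exact ⟨w, fun _ => ⟨hw, hns⟩⟩
    · exact ⟨Classical.arbitrary W, fun hx => absurd hx hα⟩
  choose g hg using hch
  set S : Set W := g '' {α | α ∈ select φ} with hS
  have hcard : S.encard ≤ (2 ^ vrank φ : ℕ) := by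
    calc S.encard ≤ ((select φ).length : ℕ∞) := encard_image_list_le _ _
      _ ≤ ((2 ^ vrank φ : ℕ) : ℕ∞) := Nat.cast_le.mpr (select_length φ)
  have hsat := h S hcard
  rw [select_correct] at hsat
  rcases hsat with ⟨α, hα, hsα⟩
  have hgα : g α ∈ S := ⟨α, hα, rfl⟩
  exact (hg α hα).2 ((mlsat_flat K α S).mp hsα (g α) hgα)
lemma mem_allBLists : ∀ (n : ℕ) (l : List Bool), l ∈ allBLists n ↔ l.length = n := by
  intro n
  induction n with
  | zero => intro l; simp [allBLists, List.length_eq_zero_iff]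
  | succ n ih =>
      intro l
      simp only [allBLists, List.mem_flatMap, List.mem_cons, List.mem_singleton]
      constructor
      · rintro ⟨t, ht, rfl | (rfl | h)⟩
        · simp [(ih t).mp ht]
        · simp [(ih t).mp ht]
        · simp at h
      · intro hl
        match l with
        | b :: t =>
            refine ⟨t, (ih t).mpr (by simpa using hl), ?_⟩
            cases b
            · exact Or.inr (Or.inl rfl)
            · exact Or.inl rfl

lemma nodup_allBLists : ∀ n : ℕ, (allBLists n).Nodup := by
  intro n
  induction n with
  | zero => simp [allBLists]
  | succ n ih =>
      show (List.flatMap _ _).Nodup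
      have key : ∀ L : List (List Bool), L.Nodup →
          (L.flatMap fun l => [true :: l, false :: l]).Nodup := by
        intro L
        induction L with
        | nil => simp
        | cons a L ihL =>
            intro hnd
            rw [List.flatMap_cons]
            rw [List.nodup_append]
            refine ⟨by simp, ihL hnd.of_cons, ?_⟩
            intro x hx y hx2 hxy
            subst hxy
            rcases List.mem_flatMap.mp hx2 with ⟨l, hl, hxl⟩
            have hal : a ≠ l := fun h => (List.nodup_cons.mp hnd).1 (h ▸ hl)
            simp only [List.mem_cons, List.not_mem_nil, or_false] at hx hxl
            rcases hx with rfl | rfl <;> rcases hxl with h | h <;>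
              rw [List.cons_eq_cons] at h <;> simp_all
      exact key _ ih

section Lemmas4
variable {W : Type} (K : Kripke W)

lemma mlisat_foldr_and (base : MLIForm) : ∀ (l : List MLIForm) (S : Set W),
    MLISat K S (l.foldr MLIForm.and base) ↔
      (∀ χ ∈ l, MLISat K S χ) ∧ MLISat K S base := by
  intro l
  induction l with
  | nil => intro S; simp [List.foldr]
  | cons χ l ih =>
      intro S
      show (MLISat K S χ ∧ MLISat K S (l.foldr MLIForm.and base)) ↔ _
      rw [ih]
      simp only [List.mem_cons]
      constructor
      · rintro ⟨h1, h2, h3⟩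
        exact ⟨fun x hx => by rcases hx with rfl | hx; exacts [h1, h2 x hx], h3⟩
      · rintro ⟨h1, h2⟩
        exact ⟨h1 χ (Or.inl rfl), fun x hx => h1 x (Or.inr hx), h2⟩

/-- Satisfaction of a big splitting disjunction: a list of teams, one per
disjunct, covering `T`. -/
lemma mlisat_bigOr : ∀ (l : List MLIForm) (T : Set W), l ≠ [] →
    (MLISat K T (mlBigOr l) ↔
      ∃ Ts : List (Set W), List.Forall₂ (fun S χ => MLISat K S χ) Ts l ∧
        Ts.foldr (· ∪ ·) ∅ = T) := by
  intro l
  induction l with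
  | nil => intro T h; exact absurd rfl h
  | cons φ l ih =>
      intro T _
      match l, ih with
      | [], _ =>
          show MLISat K T φ ↔ _
          constructor
          · intro h
            exact ⟨[T], List.Forall₂.cons h List.Forall₂.nil, by simp⟩
          · rintro ⟨Ts, hf, hu⟩
            rcases hf with _ | ⟨h, hf⟩
            rcases hf
            rw [List.foldr_cons, List.foldr_nil, Set.union_empty] at hu
            exact hu ▸ h
      | ψ :: l', ih =>
          show (∃ T₁ T₂, T₁ ∪ T₂ = T ∧ MLISat K T₁ φ ∧ MLISat K T₂ (mlBigOr (ψ :: l'))) ↔ _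
          constructor
          · rintro ⟨T₁, T₂, hT, h₁, h₂⟩
            rcases (ih T₂ (by simp)).mp h₂ with ⟨Ts, hf, hu⟩
            exact ⟨T₁ :: Ts, List.Forall₂.cons h₁ hf, by simp [hu, hT]⟩
          · rintro ⟨Ts, hf, hu⟩
            rcases hf with _ | ⟨h, hf⟩
            rename_i S Ts'
            exact ⟨S, Ts'.foldr (· ∪ ·) ∅, by simpa using hu,
              h, (ih _ (by simp)).mpr ⟨Ts', hf, rfl⟩⟩

end Lemmas4
lemma mem_foldr_union {W : Type} (Ts : List (Set W)) (x : W) :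
    x ∈ (Ts.foldr (· ∪ ·) ∅) ↔ ∃ S ∈ Ts, x ∈ S := by
  induction Ts with
  | nil => simp
  | cons S Ts ih => simp [List.foldr_cons, Set.mem_union, ih]

section Lemmas5
variable {W : Type} (K : Kripke W)

lemma mlisat_mlLit (φ : MLForm) (b : Bool) (S : Set W) :
    MLISat K S (mlLit φ b) ↔ ∀ w ∈ S, (MLSat K {w} φ ↔ b = true) := by
  cases b
  · show MLISat K S φ.nnfNeg.toMLI ↔ _
    rw [mlisat_toMLI, mlsat_flat]
    simp only [Bool.false_eq_true, iff_false]
    exact forall₂_congr fun w hw => mlsat_nnfNeg K φ w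
  · show MLISat K S φ.toMLI ↔ _
    rw [mlisat_toMLI, mlsat_flat]
    simp

lemma mlisat_depConj (φs : List MLForm) (ψ : MLForm) (a : List Bool) (S : Set W) :
    MLISat K S (mlDepConj φs a ψ) ↔
      ((∀ χ ∈ List.zipWith mlLit φs a, MLISat K S χ) ∧
       ((∀ w ∈ S, MLSat K {w} ψ) ∨ (∀ w ∈ S, ¬ MLSat K {w} ψ))) := by
  unfold mlDepConj
  rw [mlisat_foldr_and]
  refine and_congr Iff.rfl ?_
  show (MLISat K S ψ.toMLI ∨ MLISat K S ψ.nnfNeg.toMLI) ↔ _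
  rw [mlisat_toMLI, mlisat_toMLI, mlsat_flat, mlsat_flat K ψ.nnfNeg]
  refine or_congr Iff.rfl (forall₂_congr fun w hw => mlsat_nnfNeg K ψ w)

/-- Correctness of the translation of dependence atoms. -/
lemma dep_correct (φs : List MLForm) (ψ : MLForm) (T : Set W) :
    MLISat K T (mlDepTranslation φs ψ) ↔
      ∀ w ∈ T, ∀ v ∈ T, (∀ χ ∈ φs, (MLSat K {w} χ ↔ MLSat K {v} χ)) →
        (MLSat K {w} ψ ↔ MLSat K {v} ψ) := by
  classical
  set n := φs.length with hn
  have hne : (allBLists n).map (fun a => mlDepConj φs a ψ) ≠ [] := by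
    have : List.replicate n true ∈ allBLists n := (mem_allBLists n _).mpr (by simp)
    intro h
    rw [List.map_eq_nil_iff] at h
    rw [h] at this
    simp at this
  rw [mlDepTranslation, mlisat_bigOr K _ T hne]
  constructor
  · -- translation ⇒ dependence
    rintro ⟨Ts, hf, hu⟩ w hw v hv hagree
    rw [List.forall₂_iff_get] at hf
    obtain ⟨hlen, hget⟩ := hf
    rw [List.length_map] at hlen
    -- find the parts containing w and v
    obtain ⟨Sw, hSw, hwS⟩ := (mem_foldr_union Ts w).mp (hu ▸ hw)
    obtain ⟨Sv, hSv, hvS⟩ := (mem_foldr_union Ts v).mp (hu ▸ hv)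
    obtain ⟨⟨i, hi⟩, rfl⟩ := List.mem_iff_get.mp hSw
    obtain ⟨⟨j, hj⟩, rfl⟩ := List.mem_iff_get.mp hSv
    have hsi0 := hget i hi (by rw [List.length_map]; omega)
    have hsj0 := hget j hj (by rw [List.length_map]; omega)
    obtain ⟨ai, hai, hsi⟩ : ∃ a, (allBLists n)[i]'(by omega) = a ∧
        MLISat K (Ts.get ⟨i, hi⟩) (mlDepConj φs a ψ) :=
      ⟨_, rfl, by simpa only [List.get_eq_getElem, List.getElem_map] using hsi0⟩
    obtain ⟨aj, haj, hsj⟩ : ∃ a, (allBLists n)[j]'(by omega) = a ∧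
        MLISat K (Ts.get ⟨j, hj⟩) (mlDepConj φs a ψ) :=
      ⟨_, rfl, by simpa only [List.get_eq_getElem, List.getElem_map] using hsj0⟩
    rw [mlisat_depConj] at hsi hsj
    have hailen : ai.length = n := (mem_allBLists n ai).mp (hai ▸ List.getElem_mem _)
    have hajlen : aj.length = n := (mem_allBLists n aj).mp (haj ▸ List.getElem_mem _)
    -- the type of w is ai, the type of v is aj
    have htyi : ∀ k (hk : k < n), (MLSat K {w} (φs[k]'(by omega)) ↔ ai[k]'(by omega) = true) := by
      intro k hk
      have hmem : mlLit (φs[k]'(by omega)) (ai[k]'(by omega)) ∈ List.zipWith mlLit φs ai := by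
        have : (List.zipWith mlLit φs ai)[k]'(by rw [List.length_zipWith]; omega) =
            mlLit (φs[k]'(by omega)) (ai[k]'(by omega)) := List.getElem_zipWith ..
        exact this ▸ List.getElem_mem _
      exact (mlisat_mlLit K _ _ _).mp (hsi.1 _ hmem) w hwS
    have htyj : ∀ k (hk : k < n), (MLSat K {v} (φs[k]'(by omega)) ↔ aj[k]'(by omega) = true) := by
      intro k hk
      have hmem : mlLit (φs[k]'(by omega)) (aj[k]'(by omega)) ∈ List.zipWith mlLit φs aj := by
        have : (List.zipWith mlLit φs aj)[k]'(by rw [List.length_zipWith]; omega) =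
            mlLit (φs[k]'(by omega)) (aj[k]'(by omega)) := List.getElem_zipWith ..
        exact this ▸ List.getElem_mem _
      exact (mlisat_mlLit K _ _ _).mp (hsj.1 _ hmem) v hvS
    -- ai = aj since w and v agree on all φs
    have haij : ai = aj := by
      apply List.ext_getElem (by omega)
      intro k hk1 hk2
      have h1 := htyi k (by omega)
      have h2 := htyj k (by omega)
      have h3 := hagree (φs[k]'(by omega)) (List.getElem_mem _)
      cases hb1 : ai[k]'(by omega) <;> cases hb2 : aj[k]'(by omega) <;> simp_all
    -- hence i = j by nodup
    have hij : i = j := by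
      have := (List.Nodup.get_inj_iff (nodup_allBLists n)).mp
        (show (allBLists n).get ⟨i, by omega⟩ = (allBLists n).get ⟨j, by omega⟩ by
          rw [List.get_eq_getElem, List.get_eq_getElem]
          rw [show ((allBLists n)[i]'(by omega) : List Bool) = ai from hai,
            show ((allBLists n)[j]'(by omega) : List Bool) = aj from haj]
          exact haij)
      exact Fin.mk.inj_iff.mp this
    subst hij
    have hvS' : v ∈ Ts.get ⟨i, hi⟩ := hvS
    rcases hsi.2 with hall | hall
    · exact iff_of_true (hall w hwS) (hall v hvS')
    · exact iff_of_false (hall w hwS) (hall v hvS')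
  · -- dependence ⇒ translation
    intro hdep
    refine ⟨(allBLists n).map (fun a => {w ∈ T | ∀ k (hk1 : k < n) (hk2 : k < a.length),
        (MLSat K {w} (φs[k]'(by omega)) ↔ a[k] = true)}), ?_, ?_⟩
    · rw [List.forall₂_map_left_iff, List.forall₂_map_right_iff, List.forall₂_same]
      intro a ha
      have halen : a.length = n := (mem_allBLists n a).mp ha
      rw [mlisat_depConj]
      constructor
      · intro χ hχ
        obtain ⟨k, hk, rfl⟩ : ∃ k, ∃ hk : k < (List.zipWith mlLit φs a).length,
            (List.zipWith mlLit φs a)[k]'hk = χ := List.mem_iff_getElem.mp hχ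
        rw [List.length_zipWith] at hk
        rw [List.getElem_zipWith]
        rw [mlisat_mlLit]
        intro w hw
        exact hw.2 k (by omega) (by omega)
      · by_cases hemp : ∀ w, w ∉ {w ∈ T | ∀ k (hk1 : k < n) (hk2 : k < a.length),
            (MLSat K {w} (φs[k]'(by omega)) ↔ a[k] = true)}
        · exact Or.inl fun w hw => absurd hw (hemp w)
        · push_neg at hemp
          obtain ⟨w₀, hw₀⟩ := hemp
          have key : ∀ w ∈ {w ∈ T | ∀ k (hk1 : k < n) (hk2 : k < a.length),
              (MLSat K {w} (φs[k]'(by omega)) ↔ a[k] = true)},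
              (MLSat K {w} ψ ↔ MLSat K {w₀} ψ) := by
            intro w hw
            apply hdep w hw.1 w₀ hw₀.1
            intro χ hχ
            obtain ⟨k, hk, rfl⟩ := List.mem_iff_getElem.mp hχ
            rw [hw.2 k (by omega) (by omega), hw₀.2 k (by omega) (by omega)]
          by_cases hψ : MLSat K {w₀} ψ
          · exact Or.inl fun w hw => (key w hw).mpr hψ
          · exact Or.inr fun w hw hc => hψ ((key w hw).mp hc)
    · ext x
      rw [mem_foldr_union]
      simp only [List.mem_map]
      constructor
      · rintro ⟨S, ⟨a, ha, rfl⟩, hx⟩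
        exact hx.1
      · intro hx
        refine ⟨_, ⟨φs.map (fun χ => decide (MLSat K {x} χ)), (mem_allBLists n _).mpr (by simp [hn]),
          rfl⟩, hx, ?_⟩
        intro k hk1 hk2
        simp

end Lemmas5
/-- Correctness of the translation of `EMDL` into `ML(⊻)`. -/
lemma toMLI_correct {W : Type} (K : Kripke W) :
    ∀ (φ : EMDLForm) (T : Set W), MLISat K T φ.toMLI ↔ EMDLSat K T φ := by
  intro φ
  induction φ with
  | pos p => intro T; rfl
  | neg p => intro T; rfl
  | and φ ψ ihφ ihψ =>
      intro T
      show (MLISat K T φ.toMLI ∧ MLISat K T ψ.toMLI) ↔ _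
      rw [ihφ, ihψ]; rfl
  | or φ ψ ihφ ihψ =>
      intro T
      show (∃ T₁ T₂, T₁ ∪ T₂ = T ∧ MLISat K T₁ φ.toMLI ∧ MLISat K T₂ ψ.toMLI) ↔ _
      simp only [ihφ, ihψ]; rfl
  | dia φ ih =>
      intro T
      show (∃ T', K.step T T' ∧ MLISat K T' φ.toMLI) ↔ _
      simp only [ih]; rfl
  | box φ ih =>
      intro T
      show MLISat K (K.img T) φ.toMLI ↔ _
      rw [ih]; rfl
  | dep φs ψ =>
      intro T
      show MLISat K T (mlDepTranslation φs ψ) ↔ _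
      rw [dep_correct]
      rfl

/-- An `ML(⊻)`- or `EMDL`-formula `φ` is valid iff it is
satisfied by every team of size at most `2^{vrank φ}` in every Kripke
model. -/
theorem valid_iff_small_teams :
    (∀ φ : MLIForm,
      (∀ (W : Type) [Nonempty W] (K : Kripke W) (T : Set W), MLISat K T φ) ↔
      (∀ (W : Type) [Nonempty W] (K : Kripke W) (T : Set W),
        T.encard ≤ (2 ^ vrank φ : ℕ) → MLISat K T φ)) ∧
    (∀ φ : EMDLForm,
      (∀ (W : Type) [Nonempty W] (K : Kripke W) (T : Set W), EMDLSat K T φ) ↔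
      (∀ (W : Type) [Nonempty W] (K : Kripke W) (T : Set W),
        T.encard ≤ (2 ^ vrankE φ : ℕ) → EMDLSat K T φ)) := by
  constructor
  · intro φ
    constructor
    · intro h W _ K T _
      exact h W K T
    · intro h W _ K T
      exact mli_coherent K φ T fun S hS => h W K S hS
  · intro φ
    constructor
    · intro h W _ K T _
      exact h W K T
    · intro h W _ K T
      rw [← toMLI_correct]
      apply mli_coherent K φ.toMLI T
      intro S hS
      rw [toMLI_correct]
      exact h W K S hS
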